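/- For each r ≥ 1, the graph G_r on vertices v_0, ..., v_{3r} (indices mod 3r+1), where v_i is adjacent to v_{i−1}, v_{i+1}, and v_{i+3j+2} for all j ∈ {0,...,r−1}, is not 3-colorable. -/

import Mathlib

/-- Pokrovskiy's graph `G_r` on vertices `ZMod (3r+1)`: `x` and `y` are adjacent
iff they differ by `±1` or by `±(3j+2)` for some `0 ≤ j < r`. -/
def pok (r : ℕ) : SimpleGraph (ZMod (3 * r + 1)) where
  Adj x y := x ≠ y ∧ (y - x = 1 ∨ x - y = 1 ∨
    (∃ j < r, y - x = ((3 * j + 2 : ℕ) : ZMod (3 * r + 1))) ∨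
    (∃ j < r, x - y = ((3 * j + 2 : ℕ) : ZMod (3 * r + 1))))
  symm := by
    refine ⟨?_⟩
    rintro x y ⟨h1, h2⟩
    refine ⟨h1.symm, ?_⟩
    rcases h2 with h | h | h | h
    · exact Or.inr (Or.inl h)
    · exact Or.inl h
    · exact Or.inr (Or.inr (Or.inr h))
    · exact Or.inr (Or.inr (Or.inl h))
  loopless := ⟨fun x h => h.1 rfl⟩

/-- For `r ≥ 1`, the graph `G_r` is not 3-colorable. -/
theorem pok_not_three_colorable (r : ℕ) (hr : 1 ≤ r) :
    ¬ (pok r).Colorable 3 := by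
  rintro ⟨C⟩
  haveI : NeZero (3 * r + 1) := ⟨by omega⟩
  have h1 : (1 : ZMod (3 * r + 1)) ≠ 0 := by
    intro h
    have : ((1 : ℕ) : ZMod (3 * r + 1)) = 0 := by exact_mod_cast h
    rw [ZMod.natCast_eq_zero_iff] at this
    have := Nat.le_of_dvd (by norm_num) this
    omega
  have h2 : (2 : ZMod (3 * r + 1)) ≠ 0 := by
    intro h
    have : ((2 : ℕ) : ZMod (3 * r + 1)) = 0 := by exact_mod_cast h
    rw [ZMod.natCast_eq_zero_iff] at this
    have := Nat.le_of_dvd (by norm_num) this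
    omega
  -- adjacency from small differences
  have hadj : ∀ a b : ZMod (3 * r + 1),
      (b - a = 1 ∨ a - b = 1 ∨ b - a = 2 ∨ a - b = 2) → (pok r).Adj a b := by
    intro a b h
    have hc2 : ((3 * 0 + 2 : ℕ) : ZMod (3 * r + 1)) = 2 := by push_cast; ring
    have hne : a ≠ b := by
      rcases h with h | h | h | h <;> intro he <;> subst he <;>
        simp_all [sub_self]
    refine ⟨hne, ?_⟩
    rcases h with h | h | h | h
    · exact Or.inl h
    · exact Or.inr (Or.inl h)
    · exact Or.inr (Or.inr (Or.inl ⟨0, hr, by rw [hc2]; exact h⟩))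
    · exact Or.inr (Or.inr (Or.inr ⟨0, hr, by rw [hc2]; exact h⟩))
  -- pigeonhole: some color class has more than r elements
  have hcard : Fintype.card (Fin 3) * r < Fintype.card (ZMod (3 * r + 1)) := by
    rw [ZMod.card, Fintype.card_fin]; omega
  obtain ⟨i, hi⟩ := Fintype.exists_lt_card_fiber_of_mul_lt_card C hcard
  set S : Finset (ZMod (3 * r + 1)) := Finset.univ.filter fun v => C v = i with hS
  -- the triples {a, a+1, a+2} for a ∈ S are pairwise disjoint
  have key : ∀ a ∈ S, ∀ b ∈ S, a ≠ b →
      Disjoint ({a, a + 1, a + 2} : Finset (ZMod (3 * r + 1)))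
        ({b, b + 1, b + 2} : Finset (ZMod (3 * r + 1))) := by
    intro a ha b hb hab
    have hCa : C a = i := by simpa [hS] using ha
    have hCb : C b = i := by simpa [hS] using hb
    have hnadj : ¬ (pok r).Adj a b := by
      intro h
      exact C.valid h (hCa.trans hCb.symm)
    rw [Finset.disjoint_left]
    intro x hx hx'
    simp only [Finset.mem_insert, Finset.mem_singleton] at hx hx'
    rcases hx with h | h | h <;> rcases hx' with h' | h' | h'
    · exact hab (by linear_combination h' - h)
    · exact hnadj (hadj a b (Or.inr (Or.inl (by linear_combination h' - h))))
    · exact hnadj (hadj a b (Or.inr (Or.inr (Or.inr (by linear_combination h' - h)))))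
    · exact hnadj (hadj a b (Or.inl (by linear_combination h - h')))
    · exact hab (by linear_combination h' - h)
    · exact hnadj (hadj a b (Or.inr (Or.inl (by linear_combination h' - h))))
    · exact hnadj (hadj a b (Or.inr (Or.inr (Or.inl (by linear_combination h - h')))))
    · exact hnadj (hadj a b (Or.inl (by linear_combination h - h')))
    · exact hab (by linear_combination h' - h)
  -- each triple has 3 elements
  have htriple : ∀ a : ZMod (3 * r + 1),
      ({a, a + 1, a + 2} : Finset (ZMod (3 * r + 1))).card = 3 := by
    intro a
    have d1 : a ≠ a + 1 := fun h => h1 (by linear_combination -h)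
    have d2 : a ≠ a + 2 := fun h => h2 (by linear_combination -h)
    have d3 : a + 1 ≠ a + 2 := fun h => h1 (by linear_combination -h)
    exact Finset.card_eq_three.mpr ⟨a, a + 1, a + 2, d1, d2, d3, rfl⟩
  have hbig : (S.biUnion fun a => ({a, a + 1, a + 2} : Finset (ZMod (3 * r + 1)))).card
      = 3 * S.card := by
    rw [Finset.card_biUnion key]
    simp [htriple, Finset.sum_const, mul_comm]
  have hle : (S.biUnion fun a => ({a, a + 1, a + 2} : Finset (ZMod (3 * r + 1)))).card
      ≤ 3 * r + 1 := by
    have := Finset.card_le_univ (S.biUnion fun a => ({a, a + 1, a + 2} : Finset (ZMod (3 * r + 1))))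
    rwa [ZMod.card] at this
  have : r < S.card := hi
  omega
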